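/- arXiv:1810.08276 — 6 statements merged into one kernel-verified Lean document; each statement's English description precedes it below -/
import Mathlib

section
/- Let C be a minimum vertex cover of a finite simple graph G. Then for every minimal vertex cover C' of G, setting A = C ∩ C' and B = C \ C', we have C' = A ∪ (N(B) \ B), where N(B) is the set of vertices adjacent to some vertex of B. -/
variable {V : Type*}

/-- `C` is a vertex cover of `G`: every edge has an endpoint in `C`. -/
def IsVertexCover (G : SimpleGraph V) (C : Set V) : Prop :=
  ∀ ⦃u v : V⦄, G.Adj u v → u ∈ C ∨ v ∈ C

/-- A minimal vertex cover: no proper subset is a vertex cover. -/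
def IsMinimalVertexCover (G : SimpleGraph V) (C : Set V) : Prop :=
  IsVertexCover G C ∧ ∀ D : Set V, D ⊂ C → ¬ IsVertexCover G D

/-- `vc(G)`: minimum size of a vertex cover. -/
noncomputable def vcNum (G : SimpleGraph V) : ℕ :=
  sInf {n | ∃ C : Set V, IsVertexCover G C ∧ C.ncard = n}

/-- `vc⁺(G)`: maximum size of a minimal vertex cover. -/
noncomputable def vcPlus (G : SimpleGraph V) : ℕ :=
  sSup {n | ∃ C : Set V, IsMinimalVertexCover G C ∧ C.ncard = n}

/-- `I` is an independent set of `G`. -/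
def IsIndepSet (G : SimpleGraph V) (I : Set V) : Prop :=
  ∀ ⦃u v : V⦄, u ∈ I → v ∈ I → ¬ G.Adj u v

/-- A maximal independent set of `G`. -/
def IsMaxIndepSet (G : SimpleGraph V) (I : Set V) : Prop :=
  IsIndepSet G I ∧ ∀ J : Set V, IsIndepSet G J → I ⊆ J → J = I

/-- `G` is well covered: all maximal independent sets have the same size. -/
def WellCovered (G : SimpleGraph V) : Prop :=
  ∀ I J : Set V, IsMaxIndepSet G I → IsMaxIndepSet G J → I.ncard = J.ncard

/-- An independent set of the subgraph of `G` induced on `W`. -/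
def IsIndepOn (G : SimpleGraph V) (W I : Set V) : Prop :=
  I ⊆ W ∧ IsIndepSet G I

/-- A maximal independent set of the subgraph of `G` induced on `W`. -/
def IsMaxIndepOn (G : SimpleGraph V) (W I : Set V) : Prop :=
  IsIndepOn G W I ∧ ∀ J : Set V, IsIndepOn G W J → I ⊆ J → J = I

/-- The subgraph of `G` induced on `W` is well covered. -/
def WellCoveredOn (G : SimpleGraph V) (W : Set V) : Prop :=
  ∀ I J : Set V, IsMaxIndepOn G W I → IsMaxIndepOn G W J → I.ncard = J.ncard

/-- Independence number of the subgraph induced on `W`. -/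
noncomputable def indepNumOn (G : SimpleGraph V) (W : Set V) : ℕ :=
  sSup {n | ∃ I : Set V, IsIndepOn G W I ∧ I.ncard = n}

/-- Independence number `α(G)`. -/
noncomputable def indepNum (G : SimpleGraph V) : ℕ :=
  sSup {n | ∃ I : Set V, IsIndepSet G I ∧ I.ncard = n}

/-- Open neighborhood of a set `B`. -/
def nbhdSet (G : SimpleGraph V) (B : Set V) : Set V :=
  {v | ∃ b ∈ B, G.Adj b v}

/-- Crown decomposition of the subgraph of `G` induced on `W` into crown `C`,
head `H` and remainder `R`. -/
def IsCrownDecompOn (G : SimpleGraph V) (W C H R : Set V) : Prop :=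
  C.Nonempty ∧ IsIndepSet G C ∧
  (∀ ⦃u v : V⦄, u ∈ C → v ∈ R → ¬ G.Adj u v) ∧
  C ∪ H ∪ R = W ∧ Disjoint C H ∧ Disjoint C R ∧ Disjoint H R ∧
  ∃ M : V → V, (∀ h ∈ H, M h ∈ C ∧ G.Adj h (M h)) ∧ Set.InjOn M H

/-- Crown decomposition of `G`. -/
def IsCrownDecomp (G : SimpleGraph V) (C H R : Set V) : Prop :=
  IsCrownDecompOn G Set.univ C H R

/-- `G` has no isolated vertices. -/
def NoIsolated (G : SimpleGraph V) : Prop := ∀ v : V, ∃ u, G.Adj v u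

/-- Pseudo-split graph with partition `(R, C, S)`. -/
def IsPseudoSplit (G : SimpleGraph V) (R C S : Set V) : Prop :=
  R ∪ C ∪ S = Set.univ ∧ Disjoint R C ∧ Disjoint R S ∧ Disjoint C S ∧
  (∀ ⦃u v : V⦄, u ∈ C → v ∈ C → u ≠ v → G.Adj u v) ∧
  IsIndepSet G S ∧
  (∀ r ∈ R, ∀ c ∈ C, G.Adj r c) ∧
  (∀ r ∈ R, ∀ s ∈ S, ¬ G.Adj r s) ∧
  (∀ c ∈ C, ∃ s ∈ S, G.Adj c s) ∧
  (∀ s ∈ S, ∃ c ∈ C, ¬ G.Adj s c)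

/-- Join of two graphs: disjoint union plus all edges between the two sides. -/
def joinGraph {α β : Type*} (G₁ : SimpleGraph α) (G₂ : SimpleGraph β) :
    SimpleGraph (α ⊕ β) where
  Adj x y := match x, y with
    | Sum.inl a, Sum.inl b => G₁.Adj a b
    | Sum.inr a, Sum.inr b => G₂.Adj a b
    | Sum.inl _, Sum.inr _ => True
    | Sum.inr _, Sum.inl _ => True
  symm := ⟨by rintro (a|a) (b|b) h <;> first | exact h.symm | trivial⟩
  loopless := ⟨by rintro (a|a) h <;> exact h.ne rfl⟩

theorem stmt3 [Fintype V] (G : SimpleGraph V) (C : Set V)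
    (hC : IsVertexCover G C) (hmin : C.ncard = vcNum G)
    (C' : Set V) (hC' : IsMinimalVertexCover G C') :
    C' = (C ∩ C') ∪ (nbhdSet G (C \ C') \ (C \ C')) := by
  obtain ⟨hC'cov, hC'min⟩ := hC'
  ext x
  constructor
  · intro hx
    by_cases hxC : x ∈ C
    · exact Or.inl ⟨hxC, hx⟩
    · right
      -- C' \ {x} is not a cover, so some edge is covered only by x
      have hsub : C' \ {x} ⊂ C' := by
        constructor
        · exact Set.diff_subset
        · intro h
          exact (h hx).2 rfl
      have := hC'min (C' \ {x}) hsub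
      rw [IsVertexCover] at this
      push_neg at this
      obtain ⟨u, v, hadj, hu, hv⟩ := this
      -- one of u, v is in C' (cover), and then must be x
      have hcases := hC'cov hadj
      -- WLOG-ish case analysis
      rcases hcases with huC' | hvC'
      · have hux : u = x := by
          by_contra h
          exact hu ⟨huC', h⟩
        subst hux
        have hvC : v ∈ C := by
          rcases hC hadj with h | h
          · exact absurd h hxC
          · exact h
        have hvnC' : v ∉ C' := by
          intro h
          apply hv
          refine ⟨h, ?_⟩
          intro heq
          rw [Set.mem_singleton_iff] at heq
          subst heq
          exact hadj.ne rfl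
        exact ⟨⟨v, ⟨hvC, hvnC'⟩, hadj.symm⟩, fun hmem => hxC hmem.1⟩
      · have hvx : v = x := by
          by_contra h
          exact hv ⟨hvC', h⟩
        subst hvx
        have huC : u ∈ C := by
          rcases hC hadj with h | h
          · exact h
          · exact absurd h hxC
        have hunC' : u ∉ C' := by
          intro h
          apply hu
          refine ⟨h, ?_⟩
          intro heq
          rw [Set.mem_singleton_iff] at heq
          subst heq
          exact hadj.ne rfl
        exact ⟨⟨u, ⟨huC, hunC'⟩, hadj⟩, fun hmem => hxC hmem.1⟩
  · rintro (⟨_, h⟩ | ⟨⟨b, ⟨hbC, hbnC'⟩, hadj⟩, _⟩)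
    · exact h
    · rcases hC'cov hadj with h | h
      · exact absurd h hbnC'
      · exact h
end

section
/- Let C be a minimum vertex cover of a finite simple graph G, and let (A, B) be a partition of C such that B is an independent set. Then A ∪ (N(B) \ B) is a vertex cover of G. -/
variable {V : Type*}

theorem stmt4 [Fintype V] (G : SimpleGraph V) (C A B : Set V)
    (hC : IsVertexCover G C) (hmin : C.ncard = vcNum G)
    (hunion : A ∪ B = C) (hdisj : Disjoint A B) (hB : IsIndepSet G B) :
    IsVertexCover G (A ∪ (nbhdSet G B \ B)) := by
  intro u v huv
  rcases hC huv with h | h <;> rw [← hunion] at h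
  · rcases h with h | h
    · exact Or.inl (Or.inl h)
    · exact Or.inr (Or.inr ⟨⟨u, h, huv⟩, fun hv => hB h hv huv⟩)
  · rcases h with h | h
    · exact Or.inr (Or.inl h)
    · exact Or.inl (Or.inr ⟨⟨v, h, huv.symm⟩, fun hu => hB hu h huv⟩)
end

section
/- In any crown decomposition (C, H, R) of a finite simple graph G, there exists a minimum vertex cover of G containing H; consequently |H| ≤ vc(G). -/
variable {V : Type*}

theorem stmt5 [Fintype V] (G : SimpleGraph V) (C H R : Set V)
    (hcd : IsCrownDecomp G C H R) :
    (∃ K : Set V, IsVertexCover G K ∧ K.ncard = vcNum G ∧ H ⊆ K) ∧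
    H.ncard ≤ vcNum G := by
  classical
  obtain ⟨hCne, hCindep, hCR, hpart, hCH, hCRd, hHR, M, hM, hMinj⟩ := hcd
  have hne : {n | ∃ K : Set V, IsVertexCover G K ∧ K.ncard = n}.Nonempty :=
    ⟨(Set.univ : Set V).ncard, Set.univ, fun u v _ => Or.inl trivial, rfl⟩
  obtain ⟨K0, hK0cov, hK0card⟩ := Nat.sInf_mem hne
  set K : Set V := (K0 \ C) ∪ H with hKdef
  have hHsub : H ⊆ K := Set.subset_union_right
  have hKcov : IsVertexCover G K := by
    intro u v huv
    by_cases hu : u ∈ C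
    · have hvuniv : v ∈ C ∪ H ∪ R := hpart ▸ Set.mem_univ v
      rcases hvuniv with (hv | hv) | hv
      · exact absurd huv (hCindep hu hv)
      · exact Or.inr (hHsub hv)
      · exact absurd huv (hCR hu hv)
    · by_cases hv : v ∈ C
      · have huuniv : u ∈ C ∪ H ∪ R := hpart ▸ Set.mem_univ u
        rcases huuniv with (hu' | hu') | hu'
        · exact absurd huv (hCindep hu' hv)
        · exact Or.inl (hHsub hu')
        · exact absurd huv.symm (hCR hv hu')
      · rcases hK0cov huv with h | h
        · exact Or.inl (Or.inl ⟨h, hu⟩)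
        · exact Or.inr (Or.inl ⟨h, hv⟩)
  have hKeq : K = (K0 \ C) ∪ (H \ K0) := by
    ext x
    simp only [hKdef, Set.mem_union, Set.mem_diff]
    constructor
    · rintro (⟨h1, h2⟩ | hH)
      · exact Or.inl ⟨h1, h2⟩
      · by_cases hx : x ∈ K0
        · exact Or.inl ⟨hx, fun hc => Set.disjoint_left.mp hCH hc hH⟩
        · exact Or.inr ⟨hH, hx⟩
    · rintro (⟨h1, h2⟩ | ⟨h1, _⟩)
      exacts [Or.inl ⟨h1, h2⟩, Or.inr h1]
  have hdisj : Disjoint (K0 \ C) (H \ K0) := by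
    rw [Set.disjoint_left]
    rintro x ⟨hx, _⟩ ⟨_, hx'⟩
    exact hx' hx
  have hcard1 : K.ncard = (K0 \ C).ncard + (H \ K0).ncard := by
    rw [hKeq, Set.ncard_union_eq hdisj (Set.toFinite _) (Set.toFinite _)]
  have hinj : Set.InjOn M (H \ K0) := hMinj.mono Set.diff_subset
  have himg : M '' (H \ K0) ⊆ K0 ∩ C := by
    rintro _ ⟨h, ⟨hH', hK0'⟩, rfl⟩
    obtain ⟨hMC, hAdj⟩ := hM h hH'
    rcases hK0cov hAdj with h1 | h1
    · exact absurd h1 hK0'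
    · exact ⟨h1, hMC⟩
  have hcard2 : (H \ K0).ncard ≤ (K0 ∩ C).ncard := by
    calc (H \ K0).ncard = (M '' (H \ K0)).ncard := (Set.ncard_image_of_injOn hinj).symm
      _ ≤ (K0 ∩ C).ncard := Set.ncard_le_ncard himg (Set.toFinite _)
  have hcard3 : (K0 \ C).ncard + (K0 ∩ C).ncard = K0.ncard := by
    have hd : Disjoint (K0 \ C) (K0 ∩ C) := by
      rw [Set.disjoint_left]
      rintro x ⟨_, hx⟩ ⟨_, hx'⟩
      exact hx hx'
    rw [← Set.ncard_union_eq hd (Set.toFinite _) (Set.toFinite _)]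
    congr 1
    ext x
    by_cases hx : x ∈ C <;> simp [hx]
  have hKle : K.ncard ≤ vcNum G := by
    have : K.ncard ≤ K0.ncard := by omega
    rw [vcNum, ← hK0card]
    exact this
  have hge : vcNum G ≤ K.ncard := Nat.sInf_le ⟨K, hKcov, rfl⟩
  have hKcard : K.ncard = vcNum G := le_antisymm hKle hge
  exact ⟨⟨K, hKcov, hKcard, hHsub⟩,
    hKcard ▸ Set.ncard_le_ncard hHsub (Set.toFinite K)⟩
end

section
/- If (C, H, R) is a crown decomposition of a graph G and (C', H', R') is a crown decomposition of the induced subgraph G[R], then (C ∪ C', H ∪ H', R') is a crown decomposition of G. -/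
variable {V : Type*}

theorem stmt10 (G : SimpleGraph V) (C H R C' H' R' : Set V)
    (h1 : IsCrownDecomp G C H R) (h2 : IsCrownDecompOn G R C' H' R') :
    IsCrownDecomp G (C ∪ C') (H ∪ H') R' := by
  obtain ⟨hCne, hCind, hCR, hUn, hCH, hCRd, hHR, M, hM, hMinj⟩ := h1
  obtain ⟨hC'ne, hC'ind, hC'R', hUn', hC'H', hC'R'd, hH'R', M', hM', hM'inj⟩ := h2
  have hC'sub : C' ⊆ R := fun x hx => hUn' ▸ Set.mem_union_left _ (Set.mem_union_left _ hx)
  have hH'sub : H' ⊆ R := fun x hx => hUn' ▸ Set.mem_union_left _ (Set.mem_union_right _ hx)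
  have hR'sub : R' ⊆ R := fun x hx => hUn' ▸ Set.mem_union_right _ hx
  have hHH' : Disjoint H H' := Set.disjoint_of_subset_right hH'sub hHR
  refine ⟨hCne.mono Set.subset_union_left, ?_, ?_, ?_, ?_, ?_, ?_, ?_⟩
  · rintro u v (hu | hu) (hv | hv) hadj
    · exact hCind hu hv hadj
    · exact hCR hu (hC'sub hv) hadj
    · exact hCR hv (hC'sub hu) hadj.symm
    · exact hC'ind hu hv hadj
  · rintro u v (hu | hu) hv hadj
    · exact hCR hu (hR'sub hv) hadj
    · exact hC'R' hu hv hadj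
  · have he : C ∪ C' ∪ (H ∪ H') ∪ R' = C ∪ H ∪ (C' ∪ H' ∪ R') := by
      ext x; simp only [Set.mem_union]; tauto
    rw [he, hUn', hUn]
  · rw [Set.disjoint_union_left, Set.disjoint_union_right, Set.disjoint_union_right]
    exact ⟨⟨hCH, Set.disjoint_of_subset_right hH'sub hCRd⟩,
      ⟨Set.disjoint_of_subset_left hC'sub hHR.symm, hC'H'⟩⟩
  · rw [Set.disjoint_union_left]
    exact ⟨Set.disjoint_of_subset_right hR'sub hCRd, hC'R'd⟩
  · rw [Set.disjoint_union_left]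
    exact ⟨Set.disjoint_of_subset_right hR'sub hHR, hH'R'⟩
  · classical
    refine ⟨fun v => if v ∈ H then M v else M' v, ?_, ?_⟩
    · rintro h (hh | hh) <;> dsimp only
      · simp only [if_pos hh]
        exact ⟨Set.mem_union_left _ (hM h hh).1, (hM h hh).2⟩
      · rw [if_neg (fun hc => hHH'.ne_of_mem hc hh rfl)]
        exact ⟨Set.mem_union_right _ (hM' h hh).1, (hM' h hh).2⟩
    · rintro a (ha | ha) b (hb | hb) hab <;> dsimp only at hab
      · rw [if_pos ha, if_pos hb] at hab; exact hMinj ha hb hab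
      · rw [if_pos ha, if_neg (fun hc => hHH'.ne_of_mem hc hb rfl)] at hab
        exact absurd (hab ▸ (hM a ha).1) (fun hc => hCRd.ne_of_mem hc (hC'sub (hM' b hb).1) rfl)
      · rw [if_neg (fun hc => hHH'.ne_of_mem hc ha rfl), if_pos hb] at hab
        exact absurd (hab ▸ (hM' a ha).1) (fun hc => hCRd.ne_of_mem (hM b hb).1 (hC'sub hc) rfl)
      · rw [if_neg (fun hc => hHH'.ne_of_mem hc ha rfl),
          if_neg (fun hc => hHH'.ne_of_mem hc hb rfl)] at hab
        exact hM'inj ha hb hab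
end

section
/- A thick spider G with partition (R, C, S), where C = {c₁,...,c_k}, S = {s₁,...,s_k} (k ≥ 2) and s_i is adjacent to c_j iff i ≠ j, is well covered if and only if R = ∅ and k = 2. -/
variable {V : Type*}

/-- Every independent set extends to a maximal independent set. -/
lemma extendIndep (G : SimpleGraph V) {I : Set V} (hI : IsIndepSet G I) :
    ∃ J, I ⊆ J ∧ IsMaxIndepSet G J := by
  obtain ⟨m, hsub, hm⟩ := zorn_subset_nonempty {J | IsIndepSet G J}
    (fun c hc hchain _ => ⟨⋃₀ c, by
        intro u v hu hv hadj'
        obtain ⟨A, hA, huA⟩ := hu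
        obtain ⟨B, hB, hvB⟩ := hv
        rcases eq_or_ne A B with rfl | hne
        · exact hc hA huA hvB hadj'
        · rcases hchain hA hB hne with h | h
          · exact hc hB (h huA) hvB hadj'
          · exact hc hA huA (h hvB) hadj'
      , fun s hs => Set.subset_sUnion_of_mem hs⟩) I hI
  exact ⟨m, hsub, hm.1, fun K hK hmK => Set.Subset.antisymm (hm.2 hK hmK) hmK⟩

theorem stmt17 [Fintype V] (G : SimpleGraph V) (R : Set V) (k : ℕ) (hk : 2 ≤ k)
    (cf sf : Fin k → V)
    (hcf : Function.Injective cf) (hsf : Function.Injective sf)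
    (hps : IsPseudoSplit G R (Set.range cf) (Set.range sf))
    (hadj : ∀ i j, G.Adj (sf i) (cf j) ↔ i ≠ j) :
    WellCovered G ↔ (R = ∅ ∧ k = 2) := by
  obtain ⟨hUniv, hRC, hRS, hCS, hClq, hSind, hRadjC, hRnS, -, -⟩ := hps
  have hCnotS : ∀ i j : Fin k, sf i ≠ cf j := by
    intro i j h
    exact Set.disjoint_left.mp hCS ⟨j, rfl⟩ (h ▸ ⟨i, rfl⟩)
  have hSk : (Set.range sf).ncard = k := by
    rw [← Set.image_univ, Set.ncard_image_of_injective _ hsf, Set.ncard_univ]; simp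
  have i0 : Fin k := ⟨0, by omega⟩
  have hcard1lt : 1 < Fintype.card (Fin k) := by simp; omega
  constructor
  · intro hwc
    -- the maximal independent set {cf i0, sf i0}
    have hI0 : IsMaxIndepSet G {cf i0, sf i0} := by
      constructor
      · intro u v hu hv hadj'
        simp only [Set.mem_insert_iff, Set.mem_singleton_iff] at hu hv
        rcases hu with rfl | rfl <;> rcases hv with rfl | rfl
        · exact hadj'.ne rfl
        · exact (hadj i0 i0).mp hadj'.symm rfl
        · exact (hadj i0 i0).mp hadj' rfl
        · exact hadj'.ne rfl
      · intro K hK hsubK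
        refine Set.Subset.antisymm (fun v hv => ?_) hsubK
        have hc0K : cf i0 ∈ K := hsubK (Or.inl rfl)
        have hvU : v ∈ R ∪ Set.range cf ∪ Set.range sf := hUniv ▸ Set.mem_univ v
        rcases hvU with (hvR | hvC) | hvS
        · exact absurd (hRadjC v hvR (cf i0) ⟨i0, rfl⟩) (hK hv hc0K)
        · obtain ⟨i, rfl⟩ := hvC
          rcases eq_or_ne i i0 with rfl | hne
          · exact Or.inl rfl
          · exact absurd (hClq ⟨i, rfl⟩ ⟨i0, rfl⟩ (fun h => hne (hcf h))) (hK hv hc0K)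
        · obtain ⟨i, rfl⟩ := hvS
          rcases eq_or_ne i i0 with rfl | hne
          · exact Or.inr rfl
          · exact absurd ((hadj i i0).mpr hne) (hK hv hc0K)
    obtain ⟨J, hSsubJ, hJ⟩ := extendIndep G hSind
    have hJC : ∀ j : Fin k, cf j ∉ J := by
      intro j hj
      obtain ⟨i, hi⟩ := Fintype.exists_ne_of_one_lt_card hcard1lt j
      exact (hJ.1 (hSsubJ ⟨i, rfl⟩) hj) ((hadj i j).mpr hi)
    have hJeq : J = (J ∩ R) ∪ Set.range sf := by
      ext v
      constructor
      · intro hv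
        rcases (hUniv ▸ Set.mem_univ v : v ∈ R ∪ Set.range cf ∪ Set.range sf) with (h | h) | h
        · exact Or.inl ⟨hv, h⟩
        · obtain ⟨j, rfl⟩ := h; exact absurd hv (hJC j)
        · exact Or.inr h
      · rintro (⟨h, -⟩ | h)
        · exact h
        · exact hSsubJ h
    have hJcard : J.ncard = (J ∩ R).ncard + k := by
      nth_rewrite 1 [hJeq]
      rw [Set.ncard_union_eq
        (Set.disjoint_of_subset_left Set.inter_subset_right hRS)
        (Set.toFinite _) (Set.toFinite _), hSk]
    have hJ2 : J.ncard = 2 := by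
      have := hwc J {cf i0, sf i0} hJ hI0
      rwa [Set.ncard_pair (Ne.symm (hCnotS i0 i0))] at this
    have hk2 : k = 2 := by omega
    have hJRe : J ∩ R = ∅ := by
      rw [← Set.ncard_eq_zero (Set.toFinite _)]; omega
    have hJS : J = Set.range sf := by rw [hJeq, hJRe, Set.empty_union]
    refine ⟨?_, hk2⟩
    by_contra h
    obtain ⟨r, hr⟩ := Set.nonempty_iff_ne_empty.mpr h
    have hind : IsIndepSet G (Set.range sf ∪ {r}) := by
      intro u v hu hv hadj'
      rcases hu with hu | rfl <;> rcases hv with hv | rfl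
      · exact hSind hu hv hadj'
      · exact (hRnS v hr u hu) hadj'.symm
      · exact hRnS u hr v hv hadj'
      · exact hadj'.ne rfl
    have heq := hJ.2 (Set.range sf ∪ {r}) hind (by rw [hJS]; exact Set.subset_union_left)
    have hrS : r ∈ Set.range sf := by
      rw [← hJS, ← heq]; exact Or.inr rfl
    exact Set.disjoint_left.mp hRS hr hrS
  · rintro ⟨hR, hk2⟩
    intro I J hI hJ
    suffices hcard2 : ∀ I, IsMaxIndepSet G I → I.ncard = 2 by
      rw [hcard2 I hI, hcard2 J hJ]
    intro I hI
    by_cases hc : ∃ j, cf j ∈ I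
    · obtain ⟨j, hj⟩ := hc
      have hsub : I ⊆ {cf j, sf j} := by
        intro v hv
        rcases (hUniv ▸ Set.mem_univ v : v ∈ R ∪ Set.range cf ∪ Set.range sf) with (h | h) | h
        · rw [hR] at h; exact absurd h (Set.notMem_empty v)
        · obtain ⟨i, rfl⟩ := h
          rcases eq_or_ne i j with rfl | hne
          · exact Or.inl rfl
          · exact absurd (hClq ⟨i, rfl⟩ ⟨j, rfl⟩ (fun h => hne (hcf h))) (hI.1 hv hj)
        · obtain ⟨i, rfl⟩ := h
          rcases eq_or_ne i j with rfl | hne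
          · exact Or.inr rfl
          · exact absurd ((hadj i j).mpr hne) (hI.1 hv hj)
      have hind : IsIndepSet G (I ∪ {sf j}) := by
        intro u v hu hv hadj'
        have key : ∀ w, w ∈ I ∪ {sf j} → w = cf j ∨ w = sf j := by
          rintro w (hw | rfl)
          · exact hsub hw
          · exact Or.inr rfl
        rcases key u hu with rfl | rfl <;> rcases key v hv with rfl | rfl
        · exact hadj'.ne rfl
        · exact (hadj j j).mp hadj'.symm rfl
        · exact (hadj j j).mp hadj' rfl
        · exact hadj'.ne rfl
      have hsj : I ∪ {sf j} = I := hI.2 _ hind Set.subset_union_left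
      have hIeq : I = {cf j, sf j} := by
        refine Set.Subset.antisymm hsub ?_
        rintro v (rfl | rfl)
        · exact hj
        · rw [← hsj]; exact Or.inr rfl
      rw [hIeq, Set.ncard_pair (Ne.symm (hCnotS j j))]
    · push_neg at hc
      have hsub : I ⊆ Set.range sf := by
        intro v hv
        rcases (hUniv ▸ Set.mem_univ v : v ∈ R ∪ Set.range cf ∪ Set.range sf) with (h | h) | h
        · rw [hR] at h; exact absurd h (Set.notMem_empty v)
        · obtain ⟨i, rfl⟩ := h; exact absurd hv (hc i)
        · exact h
      have heq : Set.range sf = I := hI.2 _ hSind hsub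
      rw [← heq, hSk, hk2]
end

section
/- Let G be a graph with an induced subgraph H whose vertex set is partitioned into H₁ and H₂, such that G − H is nonempty, every vertex of G − H is adjacent to every vertex of H₁ and non-adjacent to every vertex of H₂. Then G is well covered if and only if G − H and G[H₂] are well covered and every maximal independent set of H containing a vertex of H₁ has exactly α(G−H) + α(G[H₂]) vertices. -/
variable {V : Type*}

section Aux
variable {V : Type*}

lemma exists_max_indep_on [Fintype V] (G : SimpleGraph V) (W I : Set V)
    (hI : IsIndepOn G W I) : ∃ J, IsMaxIndepOn G W J ∧ I ⊆ J := by
  classical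
  have hfin : {J : Set V | IsIndepOn G W J ∧ I ⊆ J}.Finite := Set.toFinite _
  have hne : {J : Set V | IsIndepOn G W J ∧ I ⊆ J}.Nonempty := ⟨I, hI, subset_rfl⟩
  obtain ⟨J, hJ, hmax⟩ := Set.Finite.exists_maximalFor Set.ncard _ hfin hne
  refine ⟨J, ⟨hJ.1, ?_⟩, hJ.2⟩
  intro K hK hJK
  have h1 : Set.ncard J = Set.ncard K :=
    (Set.ncard_le_ncard hJK (Set.toFinite K)).antisymm
      (hmax ⟨hK, hJ.2.trans hJK⟩ (Set.ncard_le_ncard hJK (Set.toFinite K)))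
  exact (Set.eq_of_subset_of_ncard_le hJK h1.ge (Set.toFinite K)).symm

lemma indepNumOn_eq_of_wc [Fintype V] {G : SimpleGraph V} {W J : Set V}
    (hwc : WellCoveredOn G W) (hJ : IsMaxIndepOn G W J) :
    indepNumOn G W = J.ncard := by
  apply IsGreatest.csSup_eq
  constructor
  · exact ⟨J, hJ.1, rfl⟩
  · rintro n ⟨I, hI, rfl⟩
    obtain ⟨K, hK, hIK⟩ := exists_max_indep_on G W I hI
    calc I.ncard ≤ K.ncard := Set.ncard_le_ncard hIK (Set.toFinite K)
    _ = J.ncard := hwc K J hK hJ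

lemma indep_subset {G : SimpleGraph V} {I J : Set V}
    (hJ : IsIndepSet G J) (h : I ⊆ J) : IsIndepSet G I :=
  fun _ _ hu hv => hJ (h hu) (h hv)

end Aux

theorem stmt18 [Fintype V] (G : SimpleGraph V) (H₁ H₂ : Set V)
    (hdisj : Disjoint H₁ H₂) (hne : ((H₁ ∪ H₂)ᶜ : Set V).Nonempty)
    (hadj1 : ∀ v ∈ (H₁ ∪ H₂)ᶜ, ∀ u ∈ H₁, G.Adj v u)
    (hadj2 : ∀ v ∈ (H₁ ∪ H₂)ᶜ, ∀ u ∈ H₂, ¬ G.Adj v u) :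
    WellCovered G ↔
      (WellCoveredOn G (H₁ ∪ H₂)ᶜ ∧ WellCoveredOn G H₂ ∧
        ∀ I : Set V, IsMaxIndepOn G (H₁ ∪ H₂) I → (I ∩ H₁).Nonempty →
          I.ncard = indepNumOn G (H₁ ∪ H₂)ᶜ + indepNumOn G H₂) := by
  classical
  set R : Set V := (H₁ ∪ H₂)ᶜ with hRdef
  have hRH₂ : Disjoint R H₂ := by
    rw [Set.disjoint_left]; intro v hv hv2; exact hv (Or.inr hv2)
  -- membership trichotomy
  have htri : ∀ v : V, v ∈ R ∨ v ∈ H₁ ∨ v ∈ H₂ := by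
    intro v
    by_cases h : v ∈ H₁ ∪ H₂
    · rcases h with h | h
      · exact Or.inr (Or.inl h)
      · exact Or.inr (Or.inr h)
    · exact Or.inl h
  -- maximal empty-extension existence
  obtain ⟨J₀, hJ₀, -⟩ := exists_max_indep_on G R ∅
    ⟨Set.empty_subset _, fun u v hu _ => absurd hu (Set.notMem_empty u)⟩
  obtain ⟨K₀, hK₀, -⟩ := exists_max_indep_on G H₂ ∅
    ⟨Set.empty_subset _, fun u v hu _ => absurd hu (Set.notMem_empty u)⟩
  -- every maximal indep set on R is nonempty
  have hRnonempty : ∀ J : Set V, IsMaxIndepOn G R J → J.Nonempty := by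
    intro J hJ
    rcases Set.eq_empty_or_nonempty J with h | h
    · obtain ⟨r, hr⟩ := hne
      have hsing : IsIndepOn G R {r} := by
        refine ⟨Set.singleton_subset_iff.mpr hr, ?_⟩
        intro u v hu hv
        rw [Set.mem_singleton_iff] at hu hv
        subst hu; subst hv; exact G.irrefl
      have h2 := hJ.2 {r} hsing (by simp [h])
      rw [h] at h2
      exact absurd h2 (Set.singleton_ne_empty r)
    · exact h
  -- L2 : combine
  have combine : ∀ J K : Set V, IsMaxIndepOn G R J → IsMaxIndepOn G H₂ K →
      IsMaxIndepSet G (J ∪ K) := by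
    intro J K hJ hK
    have hcross : ∀ u ∈ J, ∀ v ∈ K, ¬ G.Adj u v := by
      intro u hu v hv
      exact hadj2 u (hJ.1.1 hu) v (hK.1.1 hv)
    constructor
    · rintro u v (hu | hu) (hv | hv)
      · exact hJ.1.2 hu hv
      · exact hcross u hu v hv
      · intro h; exact hcross v hv u hu h.symm
      · exact hK.1.2 hu hv
    · intro L hL hsub
      obtain ⟨r, hr⟩ := hRnonempty J hJ
      have hLsub : L ⊆ R ∪ H₂ := by
        intro v hv
        rcases htri v with h | h | h
        · exact Or.inl h
        · exact absurd (hadj1 r (hJ.1.1 hr) v h)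
            (hL (hsub (Or.inl hr)) hv)
        · exact Or.inr h
      have hLR : L ∩ R = J := by
        apply hJ.2
        · exact ⟨Set.inter_subset_right, indep_subset hL Set.inter_subset_left⟩
        · exact fun x hx => ⟨hsub (Or.inl hx), hJ.1.1 hx⟩
      have hLH : L ∩ H₂ = K := by
        apply hK.2
        · exact ⟨Set.inter_subset_right, indep_subset hL Set.inter_subset_left⟩
        · exact fun x hx => ⟨hsub (Or.inr hx), hK.1.1 hx⟩
      rw [← hLR, ← hLH]
      ext x
      constructor
      · intro hx
        rcases hLsub hx with h | h
        · exact Or.inl ⟨hx, h⟩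
        · exact Or.inr ⟨hx, h⟩
      · rintro (⟨hx, -⟩ | ⟨hx, -⟩) <;> exact hx
  -- L1 : split
  have split : ∀ I : Set V, IsMaxIndepSet G I → I ∩ H₁ = ∅ →
      IsMaxIndepOn G R (I ∩ R) ∧ IsMaxIndepOn G H₂ (I ∩ H₂) ∧
      I = (I ∩ R) ∪ (I ∩ H₂) := by
    intro I hI hIH₁
    have hIsub : I ⊆ R ∪ H₂ := by
      intro v hv
      rcases htri v with h | h | h
      · exact Or.inl h
      · exact absurd (Set.mem_inter hv h) (by simp [hIH₁])
      · exact Or.inr h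
    have hmaxR : IsMaxIndepOn G R (I ∩ R) := by
      refine ⟨⟨Set.inter_subset_right, indep_subset hI.1 Set.inter_subset_left⟩, ?_⟩
      intro J hJ hsub
      have hcross : ∀ u ∈ I, ∀ v ∈ J, ¬ G.Adj u v := by
        intro u hu v hv
        rcases hIsub hu with h | h
        · exact hJ.2 (hsub ⟨hu, h⟩) hv
        · intro hadj; exact hadj2 v (hJ.1 hv) u h hadj.symm
      have hind : IsIndepSet G (I ∪ J) := by
        rintro u v (hu | hu) (hv | hv)
        · exact hI.1 hu hv
        · exact hcross u hu v hv
        · intro h; exact hcross v hv u hu h.symm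
        · exact hJ.2 hu hv
      have heq := hI.2 (I ∪ J) hind Set.subset_union_left
      have hJI : J ⊆ I := fun x hx => heq ▸ Or.inr hx
      exact Set.Subset.antisymm (fun x hx => ⟨hJI hx, hJ.1 hx⟩) hsub
    have hmaxH : IsMaxIndepOn G H₂ (I ∩ H₂) := by
      refine ⟨⟨Set.inter_subset_right, indep_subset hI.1 Set.inter_subset_left⟩, ?_⟩
      intro J hJ hsub
      have hcross : ∀ u ∈ I, ∀ v ∈ J, ¬ G.Adj u v := by
        intro u hu v hv
        rcases hIsub hu with h | h
        · exact hadj2 u h v (hJ.1 hv)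
        · exact hJ.2 (hsub ⟨hu, h⟩) hv
      have hind : IsIndepSet G (I ∪ J) := by
        rintro u v (hu | hu) (hv | hv)
        · exact hI.1 hu hv
        · exact hcross u hu v hv
        · intro h; exact hcross v hv u hu h.symm
        · exact hJ.2 hu hv
      have heq := hI.2 (I ∪ J) hind Set.subset_union_left
      have hJI : J ⊆ I := fun x hx => heq ▸ Or.inr hx
      exact Set.Subset.antisymm (fun x hx => ⟨hJI hx, hJ.1 hx⟩) hsub
    refine ⟨hmaxR, hmaxH, ?_⟩
    ext x
    constructor
    · intro hx
      rcases hIsub hx with h | h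
      · exact Or.inl ⟨hx, h⟩
      · exact Or.inr ⟨hx, h⟩
    · rintro (⟨hx, -⟩ | ⟨hx, -⟩) <;> exact hx
  constructor
  · intro hwc
    have hwcR : WellCoveredOn G R := by
      intro I J hI hJ
      have h1 := hwc (I ∪ K₀) (J ∪ K₀) (combine I K₀ hI hK₀) (combine J K₀ hJ hK₀)
      rw [Set.ncard_union_eq (Set.disjoint_of_subset hI.1.1 hK₀.1.1 hRH₂)
          (Set.toFinite _) (Set.toFinite _),
        Set.ncard_union_eq (Set.disjoint_of_subset hJ.1.1 hK₀.1.1 hRH₂)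
          (Set.toFinite _) (Set.toFinite _)] at h1
      exact Nat.add_right_cancel h1
    have hwcH : WellCoveredOn G H₂ := by
      intro I J hI hJ
      have h1 := hwc (J₀ ∪ I) (J₀ ∪ J) (combine J₀ I hJ₀ hI) (combine J₀ J hJ₀ hJ)
      rw [Set.ncard_union_eq (Set.disjoint_of_subset hJ₀.1.1 hI.1.1 hRH₂)
          (Set.toFinite _) (Set.toFinite _),
        Set.ncard_union_eq (Set.disjoint_of_subset hJ₀.1.1 hJ.1.1 hRH₂)
          (Set.toFinite _) (Set.toFinite _)] at h1
      exact Nat.add_left_cancel h1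
    refine ⟨hwcR, hwcH, ?_⟩
    intro I hI hIH₁
    obtain ⟨a, haI, haH₁⟩ := hIH₁
    -- I is maximal indep in G
    have hImax : IsMaxIndepSet G I := by
      refine ⟨hI.1.2, ?_⟩
      intro J hJ hsub
      have hJsub : J ⊆ H₁ ∪ H₂ := by
        intro v hv
        rcases htri v with h | h | h
        · exact absurd (hadj1 v h a haH₁) (hJ hv (hsub haI))
        · exact Or.inl h
        · exact Or.inr h
      exact hI.2 J ⟨hJsub, hJ⟩ hsub
    have h1 := hwc I (J₀ ∪ K₀) hImax (combine J₀ K₀ hJ₀ hK₀)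
    rw [Set.ncard_union_eq (Set.disjoint_of_subset hJ₀.1.1 hK₀.1.1 hRH₂)
        (Set.toFinite _) (Set.toFinite _)] at h1
    rw [h1, indepNumOn_eq_of_wc hwcR hJ₀, indepNumOn_eq_of_wc hwcH hK₀]
  · rintro ⟨hwcR, hwcH, hsize⟩
    have key : ∀ I : Set V, IsMaxIndepSet G I →
        I.ncard = indepNumOn G R + indepNumOn G H₂ := by
      intro I hI
      rcases Set.eq_empty_or_nonempty (I ∩ H₁) with h | h
      · obtain ⟨hmR, hmH, heq⟩ := split I hI h
        rw [heq, Set.ncard_union_eq (Set.disjoint_of_subset Set.inter_subset_right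
            Set.inter_subset_right hRH₂) (Set.toFinite _) (Set.toFinite _),
          indepNumOn_eq_of_wc hwcR hmR, indepNumOn_eq_of_wc hwcH hmH]
      · obtain ⟨a, haI, haH₁⟩ := h
        have hIsub : I ⊆ H₁ ∪ H₂ := by
          intro v hv
          rcases htri v with hh | hh | hh
          · exact absurd (hadj1 v hh a haH₁) (hI.1 hv haI)
          · exact Or.inl hh
          · exact Or.inr hh
        have hImaxH : IsMaxIndepOn G (H₁ ∪ H₂) I := by
          refine ⟨⟨hIsub, hI.1⟩, ?_⟩
          intro J hJ hsub
          exact hI.2 J hJ.2 hsub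
        exact hsize I hImaxH ⟨a, haI, haH₁⟩
    intro I J hI hJ
    rw [key I hI, key J hJ]
end
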